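/- arXiv:2605.08944 — 2 statements merged into one kernel-verified Lean document; each statement's English description precedes it below -/
import Mathlib

section
/- The class MSLC is closed under min-plus convolution. Explicitly, let β₁ = δ_{D₁} ⊗ min_{i=1..n₁} ((δ_{τ_i} ⊗ I_{σ_i} ⊗ γ_{0,ρ_i}) ∧ δ_0) and β₂ = δ_{D₂} ⊗ min_{j=1..n₂} ((δ_{τ̃_j} ⊗ I_{σ̃_j} ⊗ γ_{0,ρ̃_j}) ∧ δ_0) with all τ_i, σ_i, τ̃_j, σ̃_j ≥ 0, D₁, D₂ ≥ 0 and ρ_i, ρ̃_j ∈ [0,+∞]. Then β₁ ⊗ β₂ = δ_{D₁+D₂} ⊗ min_{i=1..n₁} min_{j=1..n₂} [ ((δ_{τ_i} ⊗ I_{σ_i} ⊗ γ_{0,ρ_i}) ∧ δ_0) ∧ ((δ_{τ̃_j} ⊗ I_{σ̃_j} ⊗ γ_{0,ρ̃_j}) ∧ δ_0) ∧ ((δ_{τ_i+τ̃_j} ⊗ I_{σ_i+σ̃_j} ⊗ γ_{0,ρ_i}) ∧ δ_0) ∧ ((δ_{τ_i+τ̃_j} ⊗ I_{σ_i+σ̃_j}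 ⊗ γ_{0,ρ̃_j}) ∧ δ_0) ], and hence β₁ ⊗ β₂ ∈ MSLC. -/
open scoped ENNReal
open Classical

noncomputable section

/-- Burst-delay function `δ_T`: `0` for `t ≤ T`, `+∞` for `t > T`. -/
def bdelay (T : ℝ) : ℝ → ℝ≥0∞ := fun t => if t ≤ T then 0 else ⊤

/-- Window function `I_w`: `w` at `t = 0`, `+∞` for `t > 0` (and `0` for `t < 0`). -/
def wndw (w : ℝ≥0∞) : ℝ → ℝ≥0∞ := fun t => if t < 0 then 0 else if t = 0 then w else ⊤

/-- Token-bucket curve `γ_{b,r}`: `b + r·t` for `t > 0`, `0` for `t ≤ 0`. -/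
def tbkt (b r : ℝ≥0∞) : ℝ → ℝ≥0∞ := fun t => if t ≤ 0 then 0 else b + r * ENNReal.ofReal t

/-- Min-plus convolution `(f ⊗ g)(t) = inf_{0 ≤ u ≤ t} (f(t − u) + g(u))` for `t ≥ 0`,
extended by `0` on negative times. -/
def mconv (f g : ℝ → ℝ≥0∞) : ℝ → ℝ≥0∞ :=
  fun t => if t < 0 then 0 else ⨅ u ∈ Set.Icc (0 : ℝ) t, (f (t - u) + g u)

/-- The basic MSLC building block `(δ_τ ⊗ I_σ ⊗ γ_{0,ρ}) ∧ δ_0`. -/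
def mslcStep (τ : ℝ) (σ ρ : ℝ≥0∞) : ℝ → ℝ≥0∞ :=
  mconv (mconv (bdelay τ) (wndw σ)) (tbkt 0 ρ) ⊓ bdelay 0

/-- Horizontal deviation (delay bound):
`hdev(α, β) = sup_{t ≥ 0} inf { d ≥ 0 : α(t − d) ≤ β(t) }`. -/
def hdev (α β : ℝ → ℝ≥0∞) : ℝ≥0∞ :=
  ⨆ t ∈ Set.Ici (0 : ℝ), ⨅ d ∈ {d : ℝ | 0 ≤ d ∧ α (t - d) ≤ β t}, ENNReal.ofReal d

/-- Vertical deviation (backlog bound): `vdev(α, β) = sup_{u ≥ 0} (α(u) − β(u))`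
with truncated subtraction (so `x − (+∞) = 0`). -/
def vdev (α β : ℝ → ℝ≥0∞) : ℝ≥0∞ :=
  ⨆ u ∈ Set.Ici (0 : ℝ), (α u - β u)

/-- Min-plus deconvolution `(f ⊘ g)(t) = sup_{u ≥ 0} (f(t + u) − g(u))`. -/
def mdeconv (f g : ℝ → ℝ≥0∞) : ℝ → ℝ≥0∞ :=
  fun t => ⨆ u ∈ Set.Ici (0 : ℝ), (f (t + u) - g u)

/-- FIFO leftover `(β ⊖_θ α)(t) = [β(t) − α(t − θ)]⁺` for `t > θ`, `0` for `t ≤ θ`. -/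
def leftover (β α : ℝ → ℝ≥0∞) (θ : ℝ) : ℝ → ℝ≥0∞ :=
  fun t => if t ≤ θ then 0 else β t - α (t - θ)

/-- Nondecreasing lower bound `f↑(t) = inf_{u ≥ t} f(u)`. -/
def ndlb (f : ℝ → ℝ≥0∞) : ℝ → ℝ≥0∞ := fun t => ⨅ u ∈ Set.Ici t, f u

section Helpers

open Set ENNReal

lemma mconv_apply (f g : ℝ → ℝ≥0∞) {t : ℝ} (ht : 0 ≤ t) :
    mconv f g t = ⨅ u ∈ Set.Icc (0 : ℝ) t, (f (t - u) + g u) := by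
  simp [mconv, not_lt.mpr ht]

lemma mconv_le (f g : ℝ → ℝ≥0∞) {t u : ℝ} (hu : u ∈ Set.Icc (0 : ℝ) t) :
    mconv f g t ≤ f (t - u) + g u := by
  rw [mconv_apply f g (hu.1.trans hu.2)]
  exact iInf₂_le u hu

lemma le_mconv {X : ℝ≥0∞} (f g : ℝ → ℝ≥0∞) {t : ℝ} (ht : 0 ≤ t)
    (h : ∀ u ∈ Set.Icc (0 : ℝ) t, X ≤ f (t - u) + g u) : X ≤ mconv f g t := by
  rw [mconv_apply f g ht]
  exact le_iInf₂ h

lemma mconv_le_comm (f g : ℝ → ℝ≥0∞) (t : ℝ) : mconv f g t ≤ mconv g f t := by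
  rcases lt_or_ge t 0 with ht | ht
  · simp [mconv, ht]
  refine le_mconv _ _ ht fun u hu => ?_
  have h2 : t - u ∈ Set.Icc (0 : ℝ) t := ⟨by linarith [hu.2], by linarith [hu.1]⟩
  have h3 := mconv_le f g h2
  have e : t - (t - u) = u := by ring
  rw [e] at h3
  exact h3.trans (add_comm _ _).le

lemma mconv_comm (f g : ℝ → ℝ≥0∞) : mconv f g = mconv g f :=
  funext fun t => le_antisymm (mconv_le_comm f g t) (mconv_le_comm g f t)

lemma mconv_assoc (f g h : ℝ → ℝ≥0∞) : mconv (mconv f g) h = mconv f (mconv g h) := by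
  funext t
  rcases lt_or_ge t 0 with ht | ht
  · simp [mconv, ht]
  apply le_antisymm
  · refine le_mconv _ _ ht fun u hu => ?_
    rw [mconv_apply g h hu.1, ENNReal.add_iInf]
    refine le_iInf fun v => ?_
    rw [ENNReal.add_iInf]
    refine le_iInf fun hv => ?_
    calc mconv (mconv f g) h t ≤ mconv f g (t - v) + h v :=
          mconv_le _ _ ⟨hv.1, hv.2.trans hu.2⟩
      _ ≤ (f (t - v - (u - v)) + g (u - v)) + h v := by
          gcongr
          exact mconv_le _ _ ⟨by linarith [hv.2], by linarith [hu.2]⟩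
      _ = f (t - u) + (g (u - v) + h v) := by rw [add_assoc]; ring_nf
  · refine le_mconv _ _ ht fun u hu => ?_
    rw [mconv_apply f g (by linarith [hu.2] : (0:ℝ) ≤ t - u), ENNReal.iInf_add]
    refine le_iInf fun v => ?_
    rw [ENNReal.iInf_add]
    refine le_iInf fun hv => ?_
    calc mconv f (mconv g h) t ≤ f (t - (u + v)) + mconv g h (u + v) :=
          mconv_le _ _ ⟨by linarith [hu.1, hv.1], by linarith [hv.2]⟩
      _ ≤ f (t - (u + v)) + (g (u + v - u) + h u) := by
          gcongr
          exact mconv_le _ _ ⟨hu.1, le_add_of_nonneg_right hv.1⟩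
      _ = (f (t - u - v) + g v) + h u := by rw [← add_assoc]; ring_nf

lemma mconv_iInf {ι : Sort*} [Nonempty ι] (f : ℝ → ℝ≥0∞) (g : ι → ℝ → ℝ≥0∞) :
    mconv f (⨅ i, g i) = ⨅ i, mconv f (g i) := by
  funext t
  rw [iInf_apply]
  rcases lt_or_ge t 0 with ht | ht
  · simp [mconv, ht]
  apply le_antisymm
  · refine le_iInf fun i => ?_
    refine le_mconv _ _ ht fun u hu => ?_
    refine (mconv_le _ _ hu).trans ?_
    gcongr
    exact iInf_apply.le.trans (iInf_le _ i)
  · refine le_mconv _ _ ht fun u hu => ?_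
    rw [iInf_apply, ENNReal.add_iInf]
    refine le_iInf fun i => ?_
    exact (iInf_le _ i).trans (mconv_le _ _ hu)

lemma mconv_iInf_left {ι : Sort*} [Nonempty ι] (f : ι → ℝ → ℝ≥0∞) (g : ℝ → ℝ≥0∞) :
    mconv (⨅ i, f i) g = ⨅ i, mconv (f i) g := by
  rw [mconv_comm, mconv_iInf]
  exact iInf_congr fun i => mconv_comm _ _

lemma bdelay_mconv {a b : ℝ} (ha : 0 ≤ a) (hb : 0 ≤ b) :
    mconv (bdelay a) (bdelay b) = bdelay (a + b) := by
  funext t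
  rcases lt_or_ge t 0 with ht | ht
  · have : t ≤ a + b := by linarith
    simp [mconv, bdelay, ht, this]
  rcases le_or_gt t (a + b) with hab | hab
  · have h0 : mconv (bdelay a) (bdelay b) t ≤ 0 := by
      have hu : max 0 (t - a) ∈ Set.Icc (0:ℝ) t := ⟨le_max_left _ _, max_le ht (by linarith)⟩
      refine (mconv_le _ _ hu).trans ?_
      have h1 : t - max 0 (t - a) ≤ a := by
        rcases le_total 0 (t - a) with h | h
        · rw [max_eq_right h]; linarith
        · rw [max_eq_left h]; linarith
      have h2 : max 0 (t - a) ≤ b := max_le hb (by linarith)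
      simp [bdelay, h1, h2]
    have : bdelay (a + b) t = 0 := by simp [bdelay, hab]
    rw [this]
    exact le_antisymm h0 zero_le
  · have : bdelay (a + b) t = ⊤ := by simp [bdelay, not_le.mpr hab]
    rw [this, eq_top_iff]
    refine le_mconv _ _ ht fun u hu => ?_
    rcases le_or_gt u b with h | h
    · have : ¬ (t - u ≤ a) := by push_neg; linarith
      simp [bdelay, this]
    · simp [bdelay, not_le.mpr h]

end Helpers
/-- Closed form of the MSLC building block. -/
def sFun (τ : ℝ) (σ ρ : ℝ≥0∞) : ℝ → ℝ≥0∞ :=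
  fun t => if t ≤ 0 then 0 else σ + ρ * ENNReal.ofReal (t - τ)

lemma bdelay_wndw (τ : ℝ) (σ : ℝ≥0∞) {s : ℝ} (hs : 0 ≤ s) :
    mconv (bdelay τ) (wndw σ) s = bdelay τ s + σ := by
  apply le_antisymm
  · have := mconv_le (bdelay τ) (wndw σ) (⟨le_refl 0, hs⟩ : (0:ℝ) ∈ Set.Icc 0 s)
    simpa [wndw] using this
  · refine le_mconv _ _ hs fun u hu => ?_
    rcases eq_or_lt_of_le hu.1 with h | h
    · subst h
      simp [wndw]
    · simp [wndw, not_lt.mpr h.le, h.ne']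

lemma mslcStep_eq {τ : ℝ} (hτ : 0 ≤ τ) (σ ρ : ℝ≥0∞) : mslcStep τ σ ρ = sFun τ σ ρ := by
  funext t
  rw [mslcStep, Pi.inf_apply]
  rcases lt_or_ge t 0 with ht | ht
  · simp [mconv, bdelay, sFun, ht, ht.le]
  rcases eq_or_lt_of_le ht with h0 | h0
  · rw [← h0]
    have : bdelay 0 0 = 0 := by simp [bdelay]
    rw [this]
    simp [sFun]
  · have hb : bdelay 0 t = ⊤ := by simp [bdelay, not_le.mpr h0]
    rw [hb, inf_top_eq]
    have hsf : sFun τ σ ρ t = σ + ρ * ENNReal.ofReal (t - τ) := if_neg (not_le.mpr h0)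
    rw [hsf]
    apply le_antisymm
    · have hu : max 0 (t - τ) ∈ Set.Icc (0:ℝ) t := ⟨le_max_left _ _, max_le ht (by linarith)⟩
      refine (mconv_le _ _ hu).trans ?_
      rcases le_total (t - τ) 0 with h | h
      · rw [max_eq_left h]
        rw [sub_zero, bdelay_wndw τ σ ht]
        have : t ≤ τ := by linarith
        simp [bdelay, tbkt, this, ENNReal.ofReal_eq_zero.mpr h]
      · rw [max_eq_right h]
        rw [bdelay_wndw τ σ (by linarith : (0:ℝ) ≤ t - (t - τ))]
        have e : t - (t - τ) = τ := by ring
        rw [e]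
        have hbτ : bdelay τ τ = 0 := by simp [bdelay]
        rw [hbτ, zero_add]
        unfold tbkt
        split_ifs with h1
        · have : t - τ = 0 := le_antisymm h1 h
          simp [this]
        · rw [zero_add]
    · refine le_mconv _ _ ht fun u hu => ?_
      rw [bdelay_wndw τ σ (by linarith [hu.2] : (0:ℝ) ≤ t - u)]
      rcases le_or_gt (t - u) τ with h | h
      · have hb0 : bdelay τ (t - u) = 0 := by simp [bdelay, h]
        rw [hb0, zero_add]
        have key : ρ * ENNReal.ofReal (t - τ) ≤ tbkt 0 ρ u := by
          rcases le_or_gt u 0 with h0u | h0u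
          · have htτ : t - τ ≤ 0 := by linarith
            simp [tbkt, h0u, ENNReal.ofReal_eq_zero.mpr htτ]
          · simp only [tbkt, if_neg (not_le.mpr h0u), zero_add]
            exact mul_le_mul_right (ENNReal.ofReal_le_ofReal (by linarith)) ρ
        exact add_le_add_right key σ
      · simp [bdelay, not_le.mpr h]
lemma sFun_nonpos {τ : ℝ} {σ ρ : ℝ≥0∞} {t : ℝ} (ht : t ≤ 0) : sFun τ σ ρ t = 0 := if_pos ht

lemma sFun_pos {τ : ℝ} {σ ρ : ℝ≥0∞} {t : ℝ} (ht : 0 < t) :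
    sFun τ σ ρ t = σ + ρ * ENNReal.ofReal (t - τ) := if_neg (not_le.mpr ht)

lemma sFun_le_left (τ : ℝ) (σ ρ : ℝ≥0∞) {t : ℝ} (ht : t ≤ τ) :
    sFun τ σ ρ t ≤ σ := by
  unfold sFun
  split_ifs with h
  · exact zero_le
  · have : t - τ ≤ 0 := by linarith
    simp [ENNReal.ofReal_eq_zero.mpr this]

lemma sFun_mconv {τ τ' : ℝ} (hτ : 0 ≤ τ) (hτ' : 0 ≤ τ') (σ σ' ρ ρ' : ℝ≥0∞) :
    mconv (sFun τ σ ρ) (sFun τ' σ' ρ') =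
      sFun τ σ ρ ⊓ sFun τ' σ' ρ' ⊓ sFun (τ + τ') (σ + σ') ρ ⊓ sFun (τ + τ') (σ + σ') ρ' := by
  funext t
  simp only [Pi.inf_apply]
  rcases lt_or_ge t 0 with ht | ht
  · simp [mconv, sFun, ht, ht.le]
  rcases eq_or_lt_of_le ht with h0 | h0
  · rw [← h0]
    rw [sFun_nonpos le_rfl, sFun_nonpos le_rfl, sFun_nonpos le_rfl, sFun_nonpos le_rfl]
    simp only [inf_idem, inf_bot_eq, ENNReal.bot_eq_zero]
    refine le_antisymm ?_ (by simp)
    have := mconv_le (sFun τ σ ρ) (sFun τ' σ' ρ') (⟨le_refl 0, le_refl 0⟩ : (0:ℝ) ∈ Set.Icc 0 0)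
    simpa [sFun_nonpos] using this
  · rw [sFun_pos h0, sFun_pos h0, sFun_pos h0, sFun_pos h0]
    apply le_antisymm
    · refine le_inf (le_inf (le_inf ?_ ?_) ?_) ?_
      · -- ≤ A via u = 0
        have := mconv_le (sFun τ σ ρ) (sFun τ' σ' ρ') (⟨le_refl 0, ht⟩ : (0:ℝ) ∈ Set.Icc 0 t)
        rw [sub_zero, sFun_nonpos le_rfl, add_zero, sFun_pos h0] at this
        exact this
      · -- ≤ B via u = t
        have := mconv_le (sFun τ σ ρ) (sFun τ' σ' ρ') (⟨ht, le_refl t⟩ : t ∈ Set.Icc 0 t)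
        rw [sub_self, sFun_nonpos le_rfl, zero_add, sFun_pos h0] at this
        exact this
      · -- ≤ C
        rcases le_or_gt t (τ + τ') with hle | hgt
        · have hu : min t τ' ∈ Set.Icc (0:ℝ) t := ⟨le_min ht hτ', min_le_left _ _⟩
          refine (mconv_le _ _ hu).trans ?_
          have h1 : sFun τ σ ρ (t - min t τ') ≤ σ := by
            refine sFun_le_left τ σ ρ ?_
            rcases min_cases t τ' with ⟨he, _⟩ | ⟨he, _⟩ <;> rw [he] <;> linarith
          have h2 : sFun τ' σ' ρ' (min t τ') ≤ σ' :=
            sFun_le_left τ' σ' ρ' (min_le_right _ _)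
          have hz : ENNReal.ofReal (t - (τ + τ')) = 0 := ENNReal.ofReal_eq_zero.mpr (by linarith)
          rw [hz, mul_zero, add_zero]
          exact add_le_add h1 h2
        · have hu : τ' ∈ Set.Icc (0:ℝ) t := ⟨hτ', by linarith⟩
          refine (mconv_le _ _ hu).trans ?_
          rw [sFun_pos (show (0:ℝ) < t - τ' by linarith)]
          have h2 : sFun τ' σ' ρ' τ' ≤ σ' := sFun_le_left τ' σ' ρ' le_rfl
          have e : t - τ' - τ = t - (τ + τ') := by ring
          rw [e]
          calc σ + ρ * ENNReal.ofReal (t - (τ + τ')) + sFun τ' σ' ρ' τ'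
              ≤ σ + ρ * ENNReal.ofReal (t - (τ + τ')) + σ' := add_le_add_right h2 _
            _ = σ + σ' + ρ * ENNReal.ofReal (t - (τ + τ')) := by ring
      · -- ≤ D
        rcases le_or_gt t (τ + τ') with hle | hgt
        · have hu : min t τ' ∈ Set.Icc (0:ℝ) t := ⟨le_min ht hτ', min_le_left _ _⟩
          refine (mconv_le _ _ hu).trans ?_
          have h1 : sFun τ σ ρ (t - min t τ') ≤ σ := by
            refine sFun_le_left τ σ ρ ?_
            rcases min_cases t τ' with ⟨he, _⟩ | ⟨he, _⟩ <;> rw [he] <;> linarith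
          have h2 : sFun τ' σ' ρ' (min t τ') ≤ σ' :=
            sFun_le_left τ' σ' ρ' (min_le_right _ _)
          have hz : ENNReal.ofReal (t - (τ + τ')) = 0 := ENNReal.ofReal_eq_zero.mpr (by linarith)
          rw [hz, mul_zero, add_zero]
          exact add_le_add h1 h2
        · have hu : t - τ ∈ Set.Icc (0:ℝ) t := ⟨by linarith, by linarith⟩
          refine (mconv_le _ _ hu).trans ?_
          have e : t - (t - τ) = τ := by ring
          rw [e]
          have h1 : sFun τ σ ρ τ ≤ σ := sFun_le_left τ σ ρ le_rfl
          rw [sFun_pos (show (0:ℝ) < t - τ by linarith)]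
          have e2 : t - τ - τ' = t - (τ + τ') := by ring
          rw [e2]
          calc sFun τ σ ρ τ + (σ' + ρ' * ENNReal.ofReal (t - (τ + τ')))
              ≤ σ + (σ' + ρ' * ENNReal.ofReal (t - (τ + τ'))) := add_le_add_left h1 _
            _ = σ + σ' + ρ' * ENNReal.ofReal (t - (τ + τ')) := by ring
    · refine le_mconv _ _ ht fun u hu => ?_
      rcases eq_or_lt_of_le hu.1 with hu0 | hu0
      · rw [← hu0, sub_zero, sFun_nonpos le_rfl, add_zero, sFun_pos h0]
        exact inf_le_left.trans (inf_le_left.trans inf_le_left)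
      rcases eq_or_lt_of_le hu.2 with hut | hut
      · rw [hut, sub_self, sFun_nonpos le_rfl, zero_add, sFun_pos h0]
        exact inf_le_left.trans (inf_le_left.trans inf_le_right)
      · rw [sFun_pos (show (0:ℝ) < t - u by linarith), sFun_pos hu0]
        rcases le_or_gt u τ' with h1 | h1
        · -- dominated by C
          refine (inf_le_left.trans inf_le_right).trans ?_
          have hm : ENNReal.ofReal (t - (τ + τ')) ≤ ENNReal.ofReal (t - u - τ) :=
            ENNReal.ofReal_le_ofReal (by linarith)
          calc σ + σ' + ρ * ENNReal.ofReal (t - (τ + τ'))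
              ≤ σ + σ' + ρ * ENNReal.ofReal (t - u - τ) := by gcongr
            _ ≤ (σ + ρ * ENNReal.ofReal (t - u - τ)) + (σ' + ρ' * ENNReal.ofReal (u - τ')) := by
                calc σ + σ' + ρ * ENNReal.ofReal (t - u - τ)
                    = (σ + ρ * ENNReal.ofReal (t - u - τ)) + σ' := by ring
                  _ ≤ _ := add_le_add_right le_self_add _
        rcases le_or_gt (t - u) τ with h2 | h2
        · -- dominated by D
          refine inf_le_right.trans ?_
          have hm : ENNReal.ofReal (t - (τ + τ')) ≤ ENNReal.ofReal (u - τ') :=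
            ENNReal.ofReal_le_ofReal (by linarith)
          calc σ + σ' + ρ' * ENNReal.ofReal (t - (τ + τ'))
              ≤ σ + σ' + ρ' * ENNReal.ofReal (u - τ') := by gcongr
            _ ≤ (σ + ρ * ENNReal.ofReal (t - u - τ)) + (σ' + ρ' * ENNReal.ofReal (u - τ')) := by
                calc σ + σ' + ρ' * ENNReal.ofReal (u - τ')
                    = σ + (σ' + ρ' * ENNReal.ofReal (u - τ')) := by ring
                  _ ≤ _ := add_le_add_left le_self_add _
        · -- both slopes active
          have ha : (0:ℝ) ≤ t - u - τ := by linarith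
          have hb : (0:ℝ) ≤ u - τ' := by linarith
          have hsplit : ENNReal.ofReal (t - (τ + τ'))
              = ENNReal.ofReal (t - u - τ) + ENNReal.ofReal (u - τ') := by
            rw [← ENNReal.ofReal_add ha hb]
            congr 1
            ring
          have key : (ρ ⊓ ρ') * ENNReal.ofReal (t - (τ + τ'))
              ≤ ρ * ENNReal.ofReal (t - u - τ) + ρ' * ENNReal.ofReal (u - τ') := by
            rw [hsplit, mul_add]
            exact add_le_add (mul_le_mul_left inf_le_left _) (mul_le_mul_left inf_le_right _)
          have hm : (σ + σ' + ρ * ENNReal.ofReal (t - (τ + τ')))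
                ⊓ (σ + σ' + ρ' * ENNReal.ofReal (t - (τ + τ')))
              ≤ σ + σ' + (ρ ⊓ ρ') * ENNReal.ofReal (t - (τ + τ')) := by
            rcases le_total ρ ρ' with h | h
            · rw [inf_eq_left.mpr h]
              exact inf_le_left
            · rw [inf_eq_right.mpr h]
              exact inf_le_right
          refine le_trans ?_ (le_trans hm ?_)
          · exact le_inf (inf_le_left.trans inf_le_right) inf_le_right
          · calc σ + σ' + (ρ ⊓ ρ') * ENNReal.ofReal (t - (τ + τ'))
                ≤ σ + σ' + (ρ * ENNReal.ofReal (t - u - τ) + ρ' * ENNReal.ofReal (u - τ')) :=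
                  add_le_add_right key _
              _ = (σ + ρ * ENNReal.ofReal (t - u - τ)) + (σ' + ρ' * ENNReal.ofReal (u - τ')) := by
                  ring

/-- the class MSLC is closed under min-plus convolution (explicit formula). -/
theorem stmt3 (n1 n2 : ℕ) (hn1 : 0 < n1) (hn2 : 0 < n2)
    (D1 D2 : ℝ) (hD1 : 0 ≤ D1) (hD2 : 0 ≤ D2)
    (tau sig : Fin n1 → ℝ) (rho : Fin n1 → ℝ≥0∞)
    (tau' sig' : Fin n2 → ℝ) (rho' : Fin n2 → ℝ≥0∞)
    (htau : ∀ i, 0 ≤ tau i) (hsig : ∀ i, 0 ≤ sig i)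
    (htau' : ∀ j, 0 ≤ tau' j) (hsig' : ∀ j, 0 ≤ sig' j) :
    mconv (mconv (bdelay D1) (⨅ i, mslcStep (tau i) (ENNReal.ofReal (sig i)) (rho i)))
          (mconv (bdelay D2) (⨅ j, mslcStep (tau' j) (ENNReal.ofReal (sig' j)) (rho' j)))
      = mconv (bdelay (D1 + D2))
          (⨅ i, ⨅ j,
            mslcStep (tau i) (ENNReal.ofReal (sig i)) (rho i)
              ⊓ mslcStep (tau' j) (ENNReal.ofReal (sig' j)) (rho' j)
              ⊓ mslcStep (tau i + tau' j)
                  (ENNReal.ofReal (sig i) + ENNReal.ofReal (sig' j)) (rho i)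
              ⊓ mslcStep (tau i + tau' j)
                  (ENNReal.ofReal (sig i) + ENNReal.ofReal (sig' j)) (rho' j)) := by
  haveI : Nonempty (Fin n1) := Fin.pos_iff_nonempty.mp hn1
  haveI : Nonempty (Fin n2) := Fin.pos_iff_nonempty.mp hn2
  set F := ⨅ i, mslcStep (tau i) (ENNReal.ofReal (sig i)) (rho i) with hF
  set G := ⨅ j, mslcStep (tau' j) (ENNReal.ofReal (sig' j)) (rho' j) with hG
  rw [mconv_assoc (bdelay D1) F (mconv (bdelay D2) G), mconv_comm (bdelay D2) G,
    ← mconv_assoc F G (bdelay D2), mconv_comm (mconv F G) (bdelay D2),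
    ← mconv_assoc (bdelay D1) (bdelay D2) (mconv F G), bdelay_mconv hD1 hD2]
  rw [hF, hG, mconv_iInf_left]
  refine congrArg _ (iInf_congr fun i => ?_)
  rw [mconv_iInf]
  refine iInf_congr fun j => ?_
  rw [mslcStep_eq (htau i), mslcStep_eq (htau' j),
    mslcStep_eq (add_nonneg (htau i) (htau' j)), mslcStep_eq (add_nonneg (htau i) (htau' j))]
  exact sFun_mconv (htau i) (htau' j) _ _ _ _
end
end

section
/- Let α = γ_{b,r} ∧ γ_{L,R'} with 0 ≤ L ≤ b and 0 ≤ r < R' < ∞, and let β = δ_D ⊗ ((δ_τ ⊗ I_σ ⊗ γ_{0,ρ}) ∧ δ_0) with D, τ, σ ≥ 0 and r < ρ ≤ R' < ∞. Suppose θ satisfies D ≤ θ ≤ D + τ − (b−L)/(R'−r), and set y = ((D + τ) − θ)·r + b. Then the nondecreasing lower bound of the FIFO leftover satisfies (β ⊖_θ α)↑ = δ_D ⊗ [ ((δ_{τ + [y−σ]⁺/(ρ−r)} ⊗ I_{[σ−y]⁺} ⊗ γ_{0,ρ−r}) ∧ δ_0) ∧ ((δ_{θ−D} ⊗ I_0 ⊗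 γ_{0,+∞}) ∧ δ_0) ], where [x]⁺ = max(x, 0). -/
open scoped ENNReal
open Classical

noncomputable section

lemma ofReal_max_zero (x : ℝ) : ENNReal.ofReal (max x 0) = ENNReal.ofReal x := by
  rcases le_total x 0 with h | h
  · rw [max_eq_right h, ENNReal.ofReal_zero, eq_comm, ENNReal.ofReal_eq_zero]
    exact h
  · rw [max_eq_left h]

lemma mconv_bdelay (T : ℝ) (hT : 0 ≤ T) (f : ℝ → ℝ≥0∞) (hf : Monotone f) (t : ℝ) :
    mconv (bdelay T) f t = if t < 0 then 0 else f (max (t - T) 0) := by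
  unfold mconv
  split_ifs with h
  · rfl
  push_neg at h
  apply le_antisymm
  · refine iInf₂_le_of_le (max (t - T) 0) ⟨le_max_right _ _, max_le (by linarith) h⟩ ?_
    have hb : bdelay T (t - max (t - T) 0) = 0 := by
      unfold bdelay
      rw [if_pos]
      rcases le_total (t - T) 0 with h1 | h1
      · rw [max_eq_right h1]; linarith
      · rw [max_eq_left h1]; linarith
    rw [hb, zero_add]
  · refine le_iInf₂ fun u hu => ?_
    unfold bdelay
    split_ifs with h1
    · rw [zero_add]
      exact hf (max_le (by linarith) hu.1)
    · simp

lemma S_mono (τ : ℝ) (σ ρ : ℝ≥0∞) :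
    Monotone fun t : ℝ => if t ≤ 0 then (0:ℝ≥0∞) else σ + ρ * ENNReal.ofReal (t - τ) := by
  intro s t hst
  dsimp only
  split_ifs with h1 h2 h3
  · exact le_rfl
  · exact zero_le
  · exact absurd (hst.trans h3) h1
  · exact add_le_add_right (mul_le_mul_right (ENNReal.ofReal_le_ofReal (by linarith)) _) _

lemma mslcStep_eval (τ : ℝ) (hτ : 0 ≤ τ) (σ ρ : ℝ≥0∞) (t : ℝ) :
    mslcStep τ σ ρ t = if t ≤ 0 then 0 else σ + ρ * ENNReal.ofReal (t - τ) := by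
  have h1 : ∀ s : ℝ, mconv (bdelay τ) (wndw σ) s
      = if s < 0 then 0 else if s ≤ τ then σ else ⊤ := by
    intro s
    unfold mconv
    split_ifs with h h2
    · rfl
    · push_neg at h
      apply le_antisymm
      · refine iInf₂_le_of_le 0 ⟨le_rfl, h⟩ ?_
        simp [bdelay, wndw, sub_zero, h2]
      · refine le_iInf₂ fun u hu => ?_
        rcases hu.1.eq_or_lt with h3 | h3
        · rw [← h3]
          simp only [wndw, sub_zero, if_neg (lt_irrefl (0:ℝ)), if_pos rfl]
          exact le_add_self
        · have hw : wndw σ u = ⊤ := by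
            simp [wndw, not_lt.2 h3.le, h3.ne']
          simp [hw]
    · push_neg at h
      rw [eq_top_iff]
      refine le_iInf₂ fun u hu => ?_
      rcases hu.1.eq_or_lt with h3 | h3
      · rw [← h3]
        have hb : bdelay τ (s - 0) = ⊤ := by simp [bdelay, sub_zero, h2]
        rw [hb, top_add]
      · have hw : wndw σ u = ⊤ := by simp [wndw, not_lt.2 h3.le, h3.ne']
        rw [hw, add_top]
  have h1' : mconv (bdelay τ) (wndw σ)
      = fun s => if s < 0 then 0 else if s ≤ τ then σ else ⊤ := funext h1
  have h2 : mconv (mconv (bdelay τ) (wndw σ)) (tbkt 0 ρ) t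
      = if t < 0 then 0 else σ + ρ * ENNReal.ofReal (t - τ) := by
    rw [h1']
    unfold mconv
    split_ifs with h
    · rfl
    push_neg at h
    apply le_antisymm
    · refine iInf₂_le_of_le (max (t - τ) 0) ⟨le_max_right _ _, max_le (by linarith) h⟩ ?_
      dsimp only
      have e1 : (if t - max (t - τ) 0 < 0 then (0:ℝ≥0∞) else if t - max (t - τ) 0 ≤ τ then σ else ⊤) = σ := by
        rcases le_total (t - τ) 0 with ha | ha
        · rw [max_eq_right ha, sub_zero, if_neg (not_lt.2 h), if_pos (by linarith)]
        · rw [max_eq_left ha]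
          rw [if_neg (by push_neg; linarith), if_pos (by linarith)]
      have e2 : tbkt 0 ρ (max (t - τ) 0) = ρ * ENNReal.ofReal (t - τ) := by
        unfold tbkt
        rcases le_or_gt (t - τ) 0 with h1' | h1'
        · rw [if_pos (by rw [max_eq_right h1'])]
          rw [ENNReal.ofReal_eq_zero.2 h1', mul_zero]
        · rw [max_eq_left h1'.le, if_neg (not_le.2 h1'), zero_add]
      rw [e1, e2]
    · refine le_iInf₂ fun u hu => ?_
      dsimp only
      rw [if_neg (not_lt.2 (by linarith [hu.2] : (0:ℝ) ≤ t - u))]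
      split_ifs with h3
      · have hb : ρ * ENNReal.ofReal (t - τ) ≤ tbkt 0 ρ u := by
          unfold tbkt
          split_ifs with h4
          · rw [ENNReal.ofReal_eq_zero.2 (by linarith), mul_zero]
          · rw [zero_add]
            exact mul_le_mul_right (ENNReal.ofReal_le_ofReal (by linarith)) _
        exact add_le_add_right hb σ
      · simp
  unfold mslcStep
  rw [Pi.inf_apply, h2]
  rcases lt_trichotomy t 0 with h | h | h
  · rw [if_pos h, if_pos h.le]
    have : bdelay 0 t = 0 := by simp [bdelay, h.le]
    rw [this]
    simp
  · subst h
    rw [if_neg (lt_irrefl (0:ℝ)), if_pos le_rfl]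
    have : bdelay 0 (0:ℝ) = 0 := by simp [bdelay]
    rw [this]
    simp
  · rw [if_neg (not_lt.2 h.le), if_neg (not_le.2 h)]
    have : bdelay 0 t = ⊤ := by simp [bdelay, not_le.2 h]
    rw [this]
    simp

lemma mslcStep_mono (τ : ℝ) (hτ : 0 ≤ τ) (σ ρ : ℝ≥0∞) : Monotone (mslcStep τ σ ρ) := by
  have : mslcStep τ σ ρ = fun t => if t ≤ 0 then 0 else σ + ρ * ENNReal.ofReal (t - τ) :=
    funext fun t => mslcStep_eval τ hτ σ ρ t
  rw [this]
  exact S_mono τ σ ρ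

set_option maxHeartbeats 1000000 in
/-- symbolic nondecreasing lower bound of the FIFO leftover, case
`D ≤ θ ≤ D + τ − (b−L)/(R'−r)`, with `y = ((D+τ) − θ)·r + b`. -/
theorem stmt15 (L b r R' D tau sig rho θ : ℝ)
    (hL : 0 ≤ L) (hLb : L ≤ b) (hr : 0 ≤ r) (hrR : r < R')
    (hD : 0 ≤ D) (htau : 0 ≤ tau) (hsig : 0 ≤ sig) (hrrho : r < rho) (hrhoR : rho ≤ R')
    (hθ1 : D ≤ θ) (hθ2 : θ ≤ D + tau - (b - L) / (R' - r)) :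
    ndlb (leftover
            (mconv (bdelay D) (mslcStep tau (ENNReal.ofReal sig) (ENNReal.ofReal rho)))
            (tbkt (ENNReal.ofReal b) (ENNReal.ofReal r)
              ⊓ tbkt (ENNReal.ofReal L) (ENNReal.ofReal R'))
            θ)
      = mconv (bdelay D)
          (mslcStep (tau + max (((D + tau) - θ) * r + b - sig) 0 / (rho - r))
              (ENNReal.ofReal (max (sig - (((D + tau) - θ) * r + b)) 0))
              (ENNReal.ofReal (rho - r))
            ⊓ mslcStep (θ - D) 0 ⊤) := by
  have hR0 : 0 ≤ R' := le_of_lt (lt_of_le_of_lt hr hrR)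
  have hrho : 0 ≤ rho := le_of_lt (lt_of_le_of_lt hr hrrho)
  have hb0 : 0 ≤ b := hL.trans hLb
  have hRr : 0 < R' - r := by linarith
  have hrhor : 0 < rho - r := by linarith
  have hc : 0 ≤ (b - L) / (R' - r) := div_nonneg (by linarith) hRr.le
  have hθtau : θ - D ≤ tau := by linarith
  have hθ0 : 0 ≤ θ := hD.trans hθ1
  set y : ℝ := ((D + tau) - θ) * r + b with hy
  have hy0 : 0 ≤ y := by
    have : 0 ≤ ((D + tau) - θ) * r := mul_nonneg (by linarith) hr
    linarith
  set T : ℝ := tau + max (y - sig) 0 / (rho - r) with hT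
  have htauT : tau ≤ T := le_add_of_nonneg_right (div_nonneg (le_max_right _ _) hrhor.le)
  have hT0 : 0 ≤ T := htau.trans htauT
  have hTt : (rho - r) * (T - tau) = max (y - sig) 0 := by
    rw [hT]
    field_simp
    ring
  have hM : max (sig - y) 0 = sig - y + max (y - sig) 0 := by
    rcases le_total sig y with h | h
    · rw [max_eq_right (by linarith), max_eq_left (by linarith)]; ring
    · rw [max_eq_left (by linarith), max_eq_right (by linarith)]; ring
  have hkey : ∀ v : ℝ, sig + rho * (v - D - tau) - (b + r * (v - θ))
      = max (sig - y) 0 + (rho - r) * (v - D - T) := by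
    intro v
    linear_combination -hM + hTt + hy
  -- evaluate β
  have hβ : ∀ u : ℝ, θ < u →
      mconv (bdelay D) (mslcStep tau (ENNReal.ofReal sig) (ENNReal.ofReal rho)) u
        = ENNReal.ofReal (sig + rho * max (u - D - tau) 0) := by
    intro u hu
    rw [mconv_bdelay D hD _ (mslcStep_mono tau htau _ _), if_neg (not_lt.2 (by linarith))]
    rw [max_eq_left (by linarith : (0:ℝ) ≤ u - D)]
    rw [mslcStep_eval tau htau, if_neg (not_le.2 (by linarith : (0:ℝ) < u - D))]
    rw [ENNReal.ofReal_add hsig (mul_nonneg hrho (le_max_right _ _)),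
      ENNReal.ofReal_mul hrho, ofReal_max_zero]
  -- evaluate α
  have hα : ∀ s : ℝ, 0 < s →
      (tbkt (ENNReal.ofReal b) (ENNReal.ofReal r)
        ⊓ tbkt (ENNReal.ofReal L) (ENNReal.ofReal R')) s
        = ENNReal.ofReal (min (b + r * s) (L + R' * s)) := by
    intro s hs
    rw [Pi.inf_apply]
    unfold tbkt
    rw [if_neg (not_le.2 hs), if_neg (not_le.2 hs)]
    rw [← ENNReal.ofReal_mul hr, ← ENNReal.ofReal_mul hR0,
      ← ENNReal.ofReal_add hb0 (mul_nonneg hr hs.le),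
      ← ENNReal.ofReal_add hL (mul_nonneg hR0 hs.le)]
    exact (Monotone.map_min (f := ENNReal.ofReal)
      (fun _ _ h => ENNReal.ofReal_le_ofReal h)).symm
  -- evaluate the leftover
  have hlef : ∀ u : ℝ, θ < u →
      leftover (mconv (bdelay D) (mslcStep tau (ENNReal.ofReal sig) (ENNReal.ofReal rho)))
          (tbkt (ENNReal.ofReal b) (ENNReal.ofReal r)
            ⊓ tbkt (ENNReal.ofReal L) (ENNReal.ofReal R')) θ u
        = ENNReal.ofReal (sig + rho * max (u - D - tau) 0
            - min (b + r * (u - θ)) (L + R' * (u - θ))) := by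
    intro u hu
    unfold leftover
    rw [if_neg (not_le.2 hu), hβ u hu, hα (u - θ) (by linarith)]
    have hq : 0 ≤ min (b + r * (u - θ)) (L + R' * (u - θ)) :=
      le_min (by nlinarith) (by nlinarith)
    rw [ENNReal.ofReal_sub _ hq]
  -- rewrite the RHS building blocks
  have hSf : mslcStep T (ENNReal.ofReal (max (sig - y) 0)) (ENNReal.ofReal (rho - r))
      = fun t => if t ≤ 0 then 0
          else ENNReal.ofReal (max (sig - y) 0)
            + ENNReal.ofReal (rho - r) * ENNReal.ofReal (t - T) :=
    funext fun t => mslcStep_eval T hT0 _ _ t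
  have hSg : mslcStep (θ - D) 0 ⊤
      = fun t => if t ≤ 0 then 0 else 0 + ⊤ * ENNReal.ofReal (t - (θ - D)) :=
    funext fun t => mslcStep_eval (θ - D) (by linarith) _ _ t
  have hmono2 : Monotone (mslcStep T (ENNReal.ofReal (max (sig - y) 0))
      (ENNReal.ofReal (rho - r)) ⊓ mslcStep (θ - D) 0 ⊤) :=
    (mslcStep_mono T hT0 _ _).inf (mslcStep_mono (θ - D) (by linarith) _ _)
  funext t
  rw [show ndlb (leftover _ _ θ) t = ⨅ u ∈ Set.Ici t, leftover _ _ θ u from rfl]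
  rw [mconv_bdelay D hD _ hmono2, Pi.inf_apply, hSf, hSg]
  dsimp only
  rcases le_or_gt t θ with hcase | hcase
  · -- LHS is 0
    have hL0 : (⨅ u ∈ Set.Ici t,
        leftover (mconv (bdelay D) (mslcStep tau (ENNReal.ofReal sig) (ENNReal.ofReal rho)))
          (tbkt (ENNReal.ofReal b) (ENNReal.ofReal r)
            ⊓ tbkt (ENNReal.ofReal L) (ENNReal.ofReal R')) θ u) = 0 := by
      apply le_antisymm _ (zero_le)
      refine iInf₂_le_of_le t Set.self_mem_Ici ?_
      unfold leftover
      rw [if_pos hcase]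
    rw [hL0]
    split_ifs with h h2
    · rfl
    · exact (inf_idem 0).symm
    · -- max (t - D) 0 > 0, but t ≤ θ so second component is 0
      rw [ENNReal.ofReal_eq_zero.2
        (by
          have := max_le (by linarith : t - D ≤ θ - D) (by linarith : (0:ℝ) ≤ θ - D)
          linarith : max (t - D) 0 - (θ - D) ≤ 0), mul_zero, add_zero]
      exact (inf_eq_right.2 (zero_le)).symm
  · -- t > θ
    have hLHS : (⨅ u ∈ Set.Ici t,
        leftover (mconv (bdelay D) (mslcStep tau (ENNReal.ofReal sig) (ENNReal.ofReal rho)))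
          (tbkt (ENNReal.ofReal b) (ENNReal.ofReal r)
            ⊓ tbkt (ENNReal.ofReal L) (ENNReal.ofReal R')) θ u)
        = ENNReal.ofReal (max (sig - y) 0 + (rho - r) * max (t - D - T) 0) := by
      apply le_antisymm
      · -- witness u₀ = max t (D + T)
        refine iInf₂_le_of_le (max t (D + T)) (Set.mem_Ici.2 (le_max_left _ _)) ?_
        rw [hlef _ (lt_of_lt_of_le hcase (le_max_left _ _))]
        apply le_of_eq
        congr 1
        have hu0 : D + T ≤ max t (D + T) := le_max_right _ _
        have hmin : b + r * (max t (D + T) - θ) ≤ L + R' * (max t (D + T) - θ) := by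
          have hbl : b - L ≤ (D + tau - θ) * (R' - r) :=
            (div_le_iff₀ hRr).1 (by linarith)
          nlinarith [mul_le_mul_of_nonneg_left
            (by linarith : D + tau - θ ≤ max t (D + T) - θ) hRr.le]
        rw [min_eq_left hmin, max_eq_left (by linarith : (0:ℝ) ≤ max t (D + T) - D - tau)]
        have hmm : max (t - D - T) 0 = max t (D + T) - D - T := by
          rcases le_total t (D + T) with h' | h'
          · rw [max_eq_right h', max_eq_right (by linarith : t - D - T ≤ 0)]; ring
          · rw [max_eq_left h', max_eq_left (by linarith : t - D - T ≥ 0)]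
        rw [hmm]
        exact hkey (max t (D + T))
      · refine le_iInf₂ fun u hu => ?_
        have htu : t ≤ u := hu
        have huθ : θ < u := lt_of_lt_of_le hcase hu
        rw [hlef u huθ]
        rcases le_or_gt u (D + tau) with hu1 | hu1
        · have h3 : max (t - D - T) 0 = 0 := max_eq_right (by linarith)
          rw [h3, mul_zero, add_zero]
          rcases le_total sig y with h4 | h4
          · rw [max_eq_right (by linarith), ENNReal.ofReal_zero]
            exact zero_le
          · rw [max_eq_left (by linarith)]
            apply ENNReal.ofReal_le_ofReal
            have h5 : min (b + r * (u - θ)) (L + R' * (u - θ)) ≤ y := by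
              refine (min_le_left _ _).trans ?_
              rw [hy]
              nlinarith [mul_le_mul_of_nonneg_left (by linarith : u - θ ≤ D + tau - θ) hr]
            have h6 : 0 ≤ rho * max (u - D - tau) 0 := mul_nonneg hrho (le_max_right _ _)
            linarith
        · rcases le_or_gt (D + T) u with hu2 | hu2
          · apply ENNReal.ofReal_le_ofReal
            rw [max_eq_left (by linarith : (0:ℝ) ≤ u - D - tau)]
            have h5 : min (b + r * (u - θ)) (L + R' * (u - θ)) ≤ b + r * (u - θ) :=
              min_le_left _ _
            have h6 : max (t - D - T) 0 ≤ u - D - T := max_le (by linarith) (by linarith)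
            have h7 := hkey u
            have hmul : (rho - r) * max (t - D - T) 0 ≤ (rho - r) * (u - D - T) :=
              mul_le_mul_of_nonneg_left h6 hrhor.le
            linarith
          · -- D + tau < u < D + T forces sig < y
            have hyT : sig < y := by
              by_contra h'
              push_neg at h'
              have hTtau : T = tau := by
                rw [hT, max_eq_right (by linarith), zero_div, add_zero]
              rw [hTtau] at hu2
              linarith
            have h3 : max (t - D - T) 0 = 0 := max_eq_right (by linarith)
            rw [h3, mul_zero, add_zero, max_eq_right (by linarith), ENNReal.ofReal_zero]
            exact zero_le
    rw [hLHS, if_neg (not_lt.2 (by linarith : (0:ℝ) ≤ t))]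
    rw [max_eq_left (by linarith : (0:ℝ) ≤ t - D)]
    have hDt : ¬ t - D ≤ 0 := not_le.2 (by linarith)
    rw [if_neg hDt, if_neg hDt]
    have htop : (⊤ : ℝ≥0∞) * ENNReal.ofReal (t - D - (θ - D)) = ⊤ :=
      ENNReal.top_mul (ENNReal.ofReal_pos.2 (by linarith)).ne'
    rw [htop, zero_add, inf_top_eq]
    rw [← ofReal_max_zero (t - D - T), ← ENNReal.ofReal_mul hrhor.le,
      ← ENNReal.ofReal_add (le_max_right _ _) (mul_nonneg hrhor.le (le_max_right _ _))]
end
end
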